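/- Let ψ_k(x) := H_k(x)·e^{−x²/4} / ((2π)^{1/4}·√(k!)), where H_k is the k-th probabilists' Hermite polynomial, and define the GUE kernel K_n(x,y) := ∑_{k=0}^{n−1} ψ_k(x)·ψ_k(y). Fix E ∈ (−2,2) and δ > 0 such that [E−δ, E+δ] ⊂ (−2,2). Then there exists a constant C > 0 (depending only on E and δ) such that for all integers n ≥ 1 and all x, y ∈ [(E−δ)√n, (E+δ)√n]: |K_n(x,y)| ≤ C·√n, and moreover if x ≠ y then |K_n(x,y)| ≤ C/|x−y|. -/

import Mathlib

open Real

/-- The Hermite function `ψ_k(x) = H_k(x)·e^{−x²/4} / ((2π)^{1/4}·√(k!))`, where `H_k` is the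
`k`-th probabilists' Hermite polynomial. -/
noncomputable def hermiteFun (k : ℕ) (x : ℝ) : ℝ :=
  (Polynomial.aeval x (Polynomial.hermite k)) * Real.exp (-x ^ 2 / 4) /
    ((2 * π) ^ ((1 : ℝ) / 4) * Real.sqrt (Nat.factorial k))

section HermAuxSection
open Polynomial MeasureTheory

namespace HermAux

theorem derivative_hermite (n : ℕ) :
    derivative (hermite (n + 1)) = (n + 1) • hermite n := by
  induction n with
  | zero => simp [hermite_one, hermite_zero]
  | succ n ih =>
    rw [hermite_succ (n + 1), derivative_sub, derivative_mul, derivative_X, one_mul, ih,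
      derivative_smul]
    have h : X * (n + 1) • hermite n - (n + 1) • derivative (hermite n)
        = (n + 1) • hermite (n + 1) := by
      rw [hermite_succ n, smul_sub, mul_smul_comm]
    rw [add_sub_assoc, h]
    module

theorem derivative_hermite' (n : ℕ) :
    derivative (hermite n) = n • hermite (n - 1) := by
  cases n with
  | zero => simp [hermite_zero]
  | succ n => simpa using derivative_hermite n

theorem hermite_comp_neg (n : ℕ) :
    (hermite n).comp (-X) = (-1) ^ n * hermite n := by
  induction n with
  | zero => simp [hermite_zero]
  | succ n ih =>
    have hd : (derivative (hermite n)).comp (-X) = -derivative ((hermite n).comp (-X)) := by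
      rw [derivative_comp]
      simp
    rw [hermite_succ, sub_comp, mul_comp, X_comp, ih, hd, ih, derivative_mul]
    simp only [derivative_pow, derivative_neg, derivative_one, mul_zero, neg_zero, zero_mul,
      zero_add, pow_succ]
    ring

/-! ### real level -/

noncomputable def H (k : ℕ) (x : ℝ) : ℝ := Polynomial.aeval x (Polynomial.hermite k)

noncomputable def cst (k : ℕ) : ℝ := (2 * π) ^ ((1 : ℝ) / 4) * Real.sqrt (Nat.factorial k)

theorem hermiteFun_eq (k : ℕ) (x : ℝ) :
    hermiteFun k x = H k x * Real.exp (-x ^ 2 / 4) / cst k := rfl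

theorem cst_pos (k : ℕ) : 0 < cst k := by
  apply mul_pos
  · exact rpow_pos_of_pos (by positivity) _
  · exact Real.sqrt_pos.2 (by exact_mod_cast Nat.factorial_pos k)

theorem cst_succ (k : ℕ) : cst (k + 1) = cst k * Real.sqrt (k + 1) := by
  unfold cst
  rw [Nat.factorial_succ, mul_assoc]
  congr 1
  rw [← Real.sqrt_mul (by positivity)]
  congr 1
  push_cast
  ring

theorem H_deriv_eq (k : ℕ) (x : ℝ) :
    (Polynomial.aeval x (derivative (Polynomial.hermite k)) : ℝ) = k * H (k - 1) x := by
  rw [derivative_hermite']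
  rw [map_nsmul]
  simp [H, nsmul_eq_mul]

theorem H_succ (k : ℕ) (x : ℝ) :
    H (k + 1) x = x * H k x - k * H (k - 1) x := by
  unfold H
  rw [hermite_succ, map_sub, map_mul, aeval_X, H_deriv_eq]
  rfl

theorem H_hasDerivAt (k : ℕ) (x : ℝ) :
    HasDerivAt (H k) ((k : ℝ) * H (k - 1) x) x := by
  have := Polynomial.hasDerivAt_aeval (𝕜 := ℝ) (hermite k) x
  rw [H_deriv_eq] at this
  exact this

theorem H_neg (k : ℕ) (x : ℝ) : H k (-x) = (-1) ^ k * H k x := by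
  have h1 := hermite_comp_neg k
  have h2 : (Polynomial.aeval x ((hermite k).comp (-X)) : ℝ) = H k (-x) := by
    rw [aeval_comp]
    simp [H]
  rw [h1] at h2
  rw [← h2]
  simp [H]

theorem psi_neg (k : ℕ) (x : ℝ) : hermiteFun k (-x) = (-1) ^ k * hermiteFun k x := by
  rw [hermiteFun_eq, hermiteFun_eq, H_neg]
  ring_nf

theorem gauss_hasDerivAt (x : ℝ) :
    HasDerivAt (fun y : ℝ => Real.exp (-y ^ 2 / 4)) (-x / 2 * Real.exp (-x ^ 2 / 4)) x := by
  have h1 : HasDerivAt (fun y : ℝ => -y ^ 2 / 4) (-x / 2) x := by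
    have : HasDerivAt (fun y : ℝ => y ^ 2) (2 * x) x := by
      simpa using (hasDerivAt_pow 2 x)
    refine (this.neg.div_const 4).congr_deriv (Eq.symm ?_)
    ring
  simpa [mul_comm] using (h1.exp)

theorem psi_hasDerivAt (k : ℕ) (x : ℝ) :
    HasDerivAt (hermiteFun k)
      (Real.sqrt k * hermiteFun (k - 1) x - x / 2 * hermiteFun k x) x := by
  have hd : HasDerivAt (fun y => H k y * Real.exp (-y ^ 2 / 4))
      ((k : ℝ) * H (k - 1) x * Real.exp (-x ^ 2 / 4)
        + H k x * (-x / 2 * Real.exp (-x ^ 2 / 4))) x :=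
    (H_hasDerivAt k x).mul (gauss_hasDerivAt x)
  have hD : HasDerivAt (hermiteFun k)
      (((k : ℝ) * H (k - 1) x * Real.exp (-x ^ 2 / 4)
        + H k x * (-x / 2 * Real.exp (-x ^ 2 / 4))) / cst k) x := hd.div_const _
  convert hD using 1
  rw [hermiteFun_eq, hermiteFun_eq]
  cases k with
  | zero => simp; ring
  | succ n =>
    simp only [Nat.add_sub_cancel]
    rw [cst_succ]
    push_cast
    set s := Real.sqrt ((n : ℝ) + 1) with hsdef
    have hs0 : 0 < s := by rw [hsdef]; positivity
    have hss : ((n : ℝ) + 1) = s * s := (Real.mul_self_sqrt (by positivity)).symm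
    rw [hss]
    field_simp [(cst_pos n).ne', hs0.ne']
    ring

theorem psi_ladder (k : ℕ) (x : ℝ) :
    Real.sqrt (k + 1) * hermiteFun (k + 1) x
      = x * hermiteFun k x - Real.sqrt k * hermiteFun (k - 1) x := by
  rw [hermiteFun_eq, hermiteFun_eq, hermiteFun_eq, H_succ, cst_succ]
  cases k with
  | zero =>
    have h1 : Real.sqrt ((0:ℕ) + 1) = 1 := by norm_num
    push_cast
    rw [show Real.sqrt (0 + 1 : ℝ) = 1 by norm_num]
    simp
    ring
  | succ n =>
    simp only [Nat.add_sub_cancel]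
    rw [cst_succ]
    push_cast
    set s := Real.sqrt ((n : ℝ) + 1) with hsdef
    set t := Real.sqrt ((n : ℝ) + 1 + 1) with htdef
    have hs0 : 0 < s := by rw [hsdef]; positivity
    have ht0 : 0 < t := by rw [htdef]; positivity
    have hss : ((n : ℝ) + 1) = s * s := (Real.mul_self_sqrt (by positivity)).symm
    rw [hss]
    field_simp [(cst_pos n).ne', hs0.ne', ht0.ne']

theorem psi_hasDerivAt2 (k : ℕ) (x : ℝ) :
    HasDerivAt (fun y => Real.sqrt k * hermiteFun (k - 1) y - y / 2 * hermiteFun k y)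
      ((x ^ 2 / 4 - k - 1 / 2) * hermiteFun k x) x := by
  have h1 : HasDerivAt (fun y => Real.sqrt k * hermiteFun (k - 1) y)
      (Real.sqrt k * (Real.sqrt (k - 1 : ℕ) * hermiteFun (k - 1 - 1) x
        - x / 2 * hermiteFun (k - 1) x)) x := (psi_hasDerivAt (k - 1) x).const_mul _
  have h2 : HasDerivAt (fun y : ℝ => y / 2 * hermiteFun k y)
      (1 / 2 * hermiteFun k x + x / 2 * (Real.sqrt k * hermiteFun (k - 1) x
        - x / 2 * hermiteFun k x)) x := by
    have ha : HasDerivAt (fun y : ℝ => y / 2) (1 / 2) x := by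
      simpa using (hasDerivAt_id x).div_const 2
    exact ha.mul (psi_hasDerivAt k x)
  have h3 := h1.sub h2
  refine h3.congr_deriv (Eq.symm ?_)
  cases k with
  | zero => simp; ring
  | succ n =>
    simp only [Nat.add_sub_cancel]
    have hL := psi_ladder n x
    have hS : Real.sqrt ((n : ℝ) + 1) * Real.sqrt ((n : ℝ) + 1) = (n : ℝ) + 1 :=
      Real.mul_self_sqrt (by positivity)
    push_cast at hL hS ⊢
    linear_combination (-(Real.sqrt ((n : ℝ) + 1))) * hL + hermiteFun (n + 1) x * hS

theorem gauss2_hasDerivAt (x : ℝ) :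
    HasDerivAt (fun y : ℝ => Real.exp (-y ^ 2 / 2)) (-x * Real.exp (-x ^ 2 / 2)) x := by
  have h1 : HasDerivAt (fun y : ℝ => -y ^ 2 / 2) (-x) x := by
    have : HasDerivAt (fun y : ℝ => y ^ 2) (2 * x) x := by
      simpa using (hasDerivAt_pow 2 x)
    refine (this.neg.div_const 2).congr_deriv (Eq.symm ?_)
    ring
  simpa [mul_comm] using (h1.exp)

theorem integrable_poly_gauss (p : Polynomial ℝ) :
    Integrable fun x : ℝ => p.eval x * Real.exp (-x ^ 2 / 2) := by
  have hmono : ∀ i : ℕ, Integrable fun x : ℝ => x ^ i * Real.exp (-x ^ 2 / 2) := by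
    intro i
    have := integrable_rpow_mul_exp_neg_mul_sq (b := 1/2) (by norm_num)
      (s := (i : ℝ)) (lt_of_lt_of_le (by norm_num) (Nat.cast_nonneg i))
    simp_rw [Real.rpow_natCast] at this
    convert this using 2 with x
    congr 2; ring
  have : (fun x : ℝ => p.eval x * Real.exp (-x ^ 2 / 2))
      = fun x : ℝ => ∑ i ∈ Finset.range (p.natDegree + 1),
        p.coeff i * (x ^ i * Real.exp (-x ^ 2 / 2)) := by
    funext x
    rw [Polynomial.eval_eq_sum_range, Finset.sum_mul]
    simp [mul_assoc]
  rw [this]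
  exact integrable_finset_sum _ fun i _ => (hmono i).const_mul _

theorem integrable_HH (p q : Polynomial ℤ) :
    Integrable fun x : ℝ => (Polynomial.aeval x p) * (Polynomial.aeval x q)
      * Real.exp (-x ^ 2 / 2) := by
  have h : ∀ x : ℝ, (Polynomial.aeval x p) * (Polynomial.aeval x q)
      = ((p * q).map (Int.castRingHom ℝ)).eval x := by
    intro x
    rw [Polynomial.eval_map, Polynomial.eval₂_mul, ← algebraMap_int_eq, ← Polynomial.aeval_def,
      ← Polynomial.aeval_def]
  simp_rw [h]
  exact integrable_poly_gauss _

theorem integrable_psi_mul (j k : ℕ) :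
    Integrable fun x : ℝ => hermiteFun j x * hermiteFun k x := by
  have h : ∀ x : ℝ, hermiteFun j x * hermiteFun k x
      = (Polynomial.aeval x (hermite j)) * (Polynomial.aeval x (hermite k))
        * Real.exp (-x ^ 2 / 2) * (1 / (cst j * cst k)) := by
    intro x
    have he : Real.exp (-x ^ 2 / 4) * Real.exp (-x ^ 2 / 4) = Real.exp (-x ^ 2 / 2) := by
      rw [← Real.exp_add]; ring_nf
    rw [hermiteFun_eq, hermiteFun_eq]
    unfold H
    rw [← he]
    ring
  simp_rw [h]
  exact (integrable_HH _ _).mul_const _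

theorem integrable_psi_sq (k : ℕ) :
    Integrable fun x : ℝ => hermiteFun k x ^ 2 := by
  simpa [pow_two] using integrable_psi_mul k k

theorem integral_gauss2 : ∫ x : ℝ, Real.exp (-x ^ 2 / 2) = Real.sqrt (2 * π) := by
  have h := integral_gaussian (1/2)
  rw [show π / (1/2 : ℝ) = 2 * π by ring] at h
  rw [← h]
  congr 1
  funext x
  congr 1
  ring

theorem integral_H_sq (k : ℕ) :
    ∫ x : ℝ, H k x ^ 2 * Real.exp (-x ^ 2 / 2)
      = (Nat.factorial k) * Real.sqrt (2 * π) := by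
  induction k with
  | zero =>
    have h0 : ∀ x : ℝ, H 0 x = 1 := by intro x; simp [H, hermite_zero]
    simp only [h0, one_pow, one_mul, Nat.factorial_zero, Nat.cast_one]
    rw [integral_gauss2]
  | succ k ih =>
    set u : ℝ → ℝ := fun x => H (k + 1) x with hu_def
    set u' : ℝ → ℝ := fun x => ((k + 1 : ℕ) : ℝ) * H k x with hu'_def
    set v : ℝ → ℝ := fun x => -(H k x * Real.exp (-x ^ 2 / 2)) with hv_def
    set v' : ℝ → ℝ := fun x => H (k + 1) x * Real.exp (-x ^ 2 / 2) with hv'_def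
    have hu : ∀ x, HasDerivAt u (u' x) x := by
      intro x
      have := H_hasDerivAt (k + 1) x
      simpa [hu_def, hu'_def] using this
    have hv : ∀ x, HasDerivAt v (v' x) x := by
      intro x
      have base := ((H_hasDerivAt k x).mul (gauss2_hasDerivAt x)).neg
      refine base.congr_deriv (Eq.symm ?_)
      rw [hv'_def]
      simp only
      rw [H_succ]
      push_cast
      ring
    have I1 : Integrable (u * v') := by
      have := integrable_HH (hermite (k + 1)) (hermite (k + 1))
      apply this.congr
      filter_upwards with x
      simp only [Pi.mul_apply, hu_def, hv'_def, H]
      ring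
    have I2 : Integrable (u' * v) := by
      have := ((integrable_HH (hermite k) (hermite k)).const_mul (((k + 1 : ℕ)) : ℝ)).neg
      apply this.congr
      filter_upwards with x
      simp only [Pi.mul_apply, Pi.neg_apply, hu'_def, hv_def, H]
      push_cast
      ring
    have I3 : Integrable (u * v) := by
      have := (integrable_HH (hermite (k + 1)) (hermite k)).neg
      apply this.congr
      filter_upwards with x
      simp only [Pi.mul_apply, Pi.neg_apply, hu_def, hv_def, H]
      push_cast
      ring
    have key := MeasureTheory.integral_mul_deriv_eq_deriv_mul_of_integrable (fun x _ => hu x) (fun x _ => hv x) I1 I2 I3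
    have lhs_eq : ∫ x : ℝ, H (k + 1) x ^ 2 * Real.exp (-x ^ 2 / 2)
        = ∫ x : ℝ, u x * v' x := by
      congr 1
      funext x
      simp only [hu_def, hv'_def]
      ring
    have rhs_eq : -∫ x : ℝ, u' x * v x
        = ((k + 1 : ℕ) : ℝ) * ∫ x : ℝ, H k x ^ 2 * Real.exp (-x ^ 2 / 2) := by
      rw [← MeasureTheory.integral_neg, ← MeasureTheory.integral_const_mul]
      congr 1
      funext x
      simp only [hu'_def, hv_def]
      ring
    rw [lhs_eq, key, rhs_eq, ih, Nat.factorial_succ]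
    push_cast
    ring

theorem cst_sq (k : ℕ) : cst k ^ 2 = Real.sqrt (2 * π) * (Nat.factorial k) := by
  unfold cst
  rw [mul_pow, Real.sq_sqrt (by exact_mod_cast (Nat.factorial_pos k).le)]
  congr 1
  rw [← Real.rpow_natCast ((2 * π) ^ ((1:ℝ)/4)) 2, ← Real.rpow_mul (by positivity)]
  rw [show ((1:ℝ)/4 * (2:ℕ) : ℝ) = 1/2 by push_cast; ring]
  rw [← Real.sqrt_eq_rpow]

theorem integral_psi_sq' (k : ℕ) : ∫ x : ℝ, hermiteFun k x ^ 2 = 1 := by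
  have h : ∀ x : ℝ, hermiteFun k x ^ 2
      = H k x ^ 2 * Real.exp (-x ^ 2 / 2) * (1 / cst k ^ 2) := by
    intro x
    have he : Real.exp (-x ^ 2 / 4) * Real.exp (-x ^ 2 / 4) = Real.exp (-x ^ 2 / 2) := by
      rw [← Real.exp_add]; ring_nf
    rw [hermiteFun_eq, ← he]
    ring
  simp_rw [h]
  rw [MeasureTheory.integral_mul_const, integral_H_sq, cst_sq]
  have h1 : Real.sqrt (2 * π) > 0 := Real.sqrt_pos.2 (by positivity)
  have h2 : ((Nat.factorial k : ℝ)) > 0 := by exact_mod_cast Nat.factorial_pos k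
  field_simp

theorem p_eq (k : ℕ) (x : ℝ) :
    Real.sqrt k * hermiteFun (k - 1) x - x / 2 * hermiteFun k x
      = (Real.sqrt k * hermiteFun (k - 1) x - Real.sqrt (k + 1) * hermiteFun (k + 1) x) / 2 := by
  linear_combination (1/2) * psi_ladder k x

theorem integrable_p_sq (k : ℕ) :
    Integrable fun x : ℝ =>
      (Real.sqrt k * hermiteFun (k - 1) x - x / 2 * hermiteFun k x) ^ 2 := by
  have base : Integrable fun x : ℝ =>
      (Real.sqrt k ^ 2 * hermiteFun (k - 1) x ^ 2
        - 2 * Real.sqrt k * Real.sqrt (k + 1) * (hermiteFun (k - 1) x * hermiteFun (k + 1) x)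
        + Real.sqrt (k + 1) ^ 2 * hermiteFun (k + 1) x ^ 2) / 4 := by
    apply Integrable.div_const
    apply Integrable.add
    · exact ((integrable_psi_sq (k - 1)).const_mul _).sub
        ((integrable_psi_mul (k - 1) (k + 1)).const_mul _)
    · exact (integrable_psi_sq (k + 1)).const_mul _
  apply base.congr
  filter_upwards with x
  rw [p_eq]
  ring

theorem integral_p_sq_le (k : ℕ) (hk : 1 ≤ k) :
    ∫ x : ℝ, (Real.sqrt k * hermiteFun (k - 1) x - x / 2 * hermiteFun k x) ^ 2
      ≤ 3 / 2 * (k : ℝ) := by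
  have hg : Integrable fun x : ℝ =>
      (k : ℝ) / 2 * hermiteFun (k - 1) x ^ 2 + ((k : ℝ) + 1) / 2 * hermiteFun (k + 1) x ^ 2 :=
    ((integrable_psi_sq (k - 1)).const_mul _).add ((integrable_psi_sq (k + 1)).const_mul _)
  have hmono : ∀ x : ℝ,
      (Real.sqrt k * hermiteFun (k - 1) x - x / 2 * hermiteFun k x) ^ 2
        ≤ (k : ℝ) / 2 * hermiteFun (k - 1) x ^ 2 + ((k : ℝ) + 1) / 2 * hermiteFun (k + 1) x ^ 2 := by
    intro x
    rw [p_eq]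
    have h1 : Real.sqrt k ^ 2 = (k : ℝ) := Real.sq_sqrt (by positivity)
    have h2 : Real.sqrt ((k : ℝ) + 1) ^ 2 = (k : ℝ) + 1 := Real.sq_sqrt (by positivity)
    nlinarith [sq_nonneg (Real.sqrt k * hermiteFun (k - 1) x
      + Real.sqrt (k + 1) * hermiteFun (k + 1) x)]
  calc ∫ x : ℝ, (Real.sqrt k * hermiteFun (k - 1) x - x / 2 * hermiteFun k x) ^ 2
      ≤ ∫ x : ℝ, ((k : ℝ) / 2 * hermiteFun (k - 1) x ^ 2
          + ((k : ℝ) + 1) / 2 * hermiteFun (k + 1) x ^ 2) :=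
        MeasureTheory.integral_mono (integrable_p_sq k) hg hmono
    _ = (k : ℝ) / 2 * 1 + ((k : ℝ) + 1) / 2 * 1 := by
        rw [MeasureTheory.integral_add (((integrable_psi_sq (k - 1)).const_mul _))
          ((integrable_psi_sq (k + 1)).const_mul _), MeasureTheory.integral_const_mul,
          MeasureTheory.integral_const_mul, integral_psi_sq', integral_psi_sq']
    _ ≤ 3 / 2 * (k : ℝ) := by
        have : (1 : ℝ) ≤ k := by exact_mod_cast hk
        nlinarith

set_option maxHeartbeats 1600000 in
/-- The energy/averaging bulk bound. -/
theorem energy_bound (r' r : ℝ) (h0 : 0 ≤ r') (hr' : r' < r) (hr : r < 2) :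
    ∃ C : ℝ, 0 < C ∧ ∀ k : ℕ, 1 ≤ k → ∀ x : ℝ, |x| ≤ r' * Real.sqrt k →
      hermiteFun k x ^ 2 ≤ C / Real.sqrt k ∧
      (Real.sqrt k * hermiteFun (k - 1) x - x / 2 * hermiteFun k x) ^ 2
        ≤ C * Real.sqrt k := by
  obtain ⟨α, hα_def⟩ : ∃ a : ℝ, a = 1 - r ^ 2 / 4 := ⟨_, rfl⟩
  have hrpos : (0:ℝ) ≤ r := le_of_lt (lt_of_le_of_lt h0 hr')
  have hα : 0 < α := by rw [hα_def]; nlinarith [hr, hrpos]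

  obtain ⟨β, hβ_def⟩ : ∃ a : ℝ, a = r - r' := ⟨_, rfl⟩
  have hβ : 0 < β := by rw [hβ_def]; linarith
  obtain ⟨C, hC_def⟩ : ∃ a : ℝ, a = 2 * (1 + 3 / (2 * α)) / β := ⟨_, rfl⟩
  have hC1 : 0 < 1 + 3 / (2 * α) := by positivity
  have hCpos : 0 < C := by rw [hC_def]; positivity
  refine ⟨C, hCpos, ?_⟩
  -- main estimate for 0 ≤ x; then parity
  suffices main : ∀ k : ℕ, 1 ≤ k → ∀ x : ℝ, 0 ≤ x → x ≤ r' * Real.sqrt k →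
      hermiteFun k x ^ 2 ≤ C / Real.sqrt k ∧
      (Real.sqrt k * hermiteFun (k - 1) x - x / 2 * hermiteFun k x) ^ 2
        ≤ C * Real.sqrt k by
    intro k hk x hx
    rcases le_or_gt 0 x with hx0 | hx0
    · exact main k hk x hx0 (by rwa [abs_of_nonneg hx0] at hx)
    · have hx' : 0 ≤ -x := by linarith
      have habs : -x ≤ r' * Real.sqrt k := by rwa [abs_of_neg hx0] at hx
      obtain ⟨c1, c2⟩ := main k hk (-x) hx' habs
      have hsq : ∀ (s : ℝ) (m : ℕ), ((-1:ℝ) ^ m * s) ^ 2 = s ^ 2 := by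
        intro s m
        rw [mul_pow, ← pow_mul, mul_comm m 2, pow_mul]
        norm_num
      have e1 : hermiteFun k (-x) ^ 2 = hermiteFun k x ^ 2 := by
        rw [psi_neg]; exact hsq _ k
      have e2 : (Real.sqrt k * hermiteFun (k - 1) (-x) - -x / 2 * hermiteFun k (-x)) ^ 2
          = (Real.sqrt k * hermiteFun (k - 1) x - x / 2 * hermiteFun k x) ^ 2 := by
        rw [psi_neg, psi_neg]
        cases k with
        | zero => simp; ring
        | succ n =>
          have e3 : Real.sqrt (n+1 : ℕ) * ((-1:ℝ) ^ (n + 1 - 1) * hermiteFun (n + 1 - 1) x)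
              - -x / 2 * ((-1:ℝ) ^ (n+1) * hermiteFun (n+1) x)
              = (-1:ℝ) ^ n * (Real.sqrt (n+1 : ℕ) * hermiteFun (n + 1 - 1) x
                - x / 2 * hermiteFun (n+1) x) := by
            simp only [Nat.add_sub_cancel, pow_succ]
            ring
          rw [e3, hsq]
      rw [← e1, ← e2]
      exact ⟨c1, c2⟩
  intro k hk x hx0 hxle
  have hk1 : (1 : ℝ) ≤ (k : ℝ) := by exact_mod_cast hk
  have hsk : (1 : ℝ) ≤ Real.sqrt k := by
    rw [show (1:ℝ) = Real.sqrt 1 by simp]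
    exact Real.sqrt_le_sqrt hk1
  have hskpos : 0 < Real.sqrt k := lt_of_lt_of_le one_pos hsk
  have hsksq : Real.sqrt k ^ 2 = (k : ℝ) := Real.sq_sqrt (by positivity)
  obtain ⟨b, hb_def⟩ : ∃ a : ℝ, a = r * Real.sqrt k := ⟨_, rfl⟩
  obtain ⟨L, hL_def⟩ : ∃ a : ℝ, a = β * Real.sqrt k := ⟨_, rfl⟩
  have hLpos : 0 < L := by rw [hL_def]; positivity
  have hbpos : 0 < b := by
    have : 0 < r := lt_of_le_of_lt h0 hr'
    rw [hb_def]; positivity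
  -- q lower bound on [-b, b]
  have hq_lb : ∀ y ∈ Set.Icc (-b) b, α * k ≤ (k : ℝ) + 1/2 - y ^ 2 / 4 := by
    intro y hy
    have hy2 : y ^ 2 ≤ b ^ 2 := sq_le_sq' (by linarith [hy.1]) hy.2
    have hb2 : b ^ 2 = r ^ 2 * k := by rw [hb_def, mul_pow, hsksq]
    rw [hα_def]
    nlinarith [hy2, hb2, hk1]
  have hqpos : ∀ y ∈ Set.Icc (-b) b, 0 < (k : ℝ) + 1/2 - y ^ 2 / 4 := by
    intro y hy
    have h := hq_lb y hy
    have hkpos : (0:ℝ) < (k:ℝ) := by linarith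
    have hαk : 0 < α * (k:ℝ) := mul_pos hα hkpos
    linarith
  -- derivative of the energy
  obtain ⟨T, hT_def⟩ : ∃ f : ℝ → ℝ, f = fun z => hermiteFun k z ^ 2
      + (Real.sqrt k * hermiteFun (k - 1) z - z / 2 * hermiteFun k z) ^ 2
        / ((k : ℝ) + 1/2 - z ^ 2 / 4) := ⟨_, rfl⟩
  have hT : ∀ y ∈ Set.Icc (-b) b, HasDerivAt T
      ((Real.sqrt k * hermiteFun (k - 1) y - y / 2 * hermiteFun k y) ^ 2 * (y / 2)
        / ((k : ℝ) + 1/2 - y ^ 2 / 4) ^ 2) y := by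
    intro y hy
    rw [hT_def]
    have hqy := hqpos y hy
    have h1 := (psi_hasDerivAt k y).pow 2
    have hp := psi_hasDerivAt2 k y
    have hp2 := hp.pow 2
    have hqd : HasDerivAt (fun z : ℝ => (k : ℝ) + 1/2 - z ^ 2 / 4) (-(y / 2)) y := by
      have h := ((hasDerivAt_pow 2 y).div_const 4).const_sub ((k : ℝ) + 1/2)
      refine h.congr_deriv (Eq.symm ?_)
      push_cast
      ring
    have hdiv := hp2.div hqd hqy.ne'
    have hsum := h1.add hdiv
    refine hsum.congr_deriv (Eq.symm ?_)
    norm_num only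
    obtain ⟨Q, hQdef⟩ : ∃ a : ℝ, a = (k:ℝ) + 1/2 - y^2/4 := ⟨_, rfl⟩
    rw [← hQdef]
    have hneg : y^2/4 - (k:ℝ) - 1/2 = -Q := by rw [hQdef]; ring
    rw [hneg]
    have hQne : Q ≠ 0 := by rw [hQdef]; exact hqy.ne'
    simp only [Pi.pow_apply]
    field_simp
    ring
  have hsub : Set.Icc (0:ℝ) b ⊆ Set.Icc (-b) b := by
    apply Set.Icc_subset_Icc _ le_rfl
    linarith
  have hmonoT : MonotoneOn T (Set.Icc (0:ℝ) b) := by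
    apply monotoneOn_of_deriv_nonneg (convex_Icc 0 b)
    · intro y hy
      exact (hT y (hsub hy)).continuousAt.continuousWithinAt
    · intro y hy
      rw [interior_Icc] at hy
      exact ((hT y (hsub (Set.mem_Icc_of_Ioo hy))).differentiableAt).differentiableWithinAt
    · intro y hy
      rw [interior_Icc] at hy
      rw [(hT y (hsub (Set.mem_Icc_of_Ioo hy))).deriv]
      apply div_nonneg _ (sq_nonneg _)
      exact mul_nonneg (sq_nonneg _) (by linarith [hy.1])
  -- averaging over J = [x, x+L]
  set J : Set ℝ := Set.Icc x (x + L) with hJ_def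
  have hJsub : J ⊆ Set.Icc (0:ℝ) b := by
    apply Set.Icc_subset_Icc hx0
    rw [hb_def, hL_def, hβ_def]
    have : r' * Real.sqrt k + (r - r') * Real.sqrt k = r * Real.sqrt k := by ring
    linarith
  have hTcont : ContinuousOn T J := by
    intro y hy
    exact (hT y (hsub (hJsub hy))).continuousAt.continuousWithinAt
  have hTc_int : IntegrableOn T J := hTcont.integrableOn_Icc
  -- T x * L ≤ ∫_J T
  have step1 : T x * L ≤ ∫ y in J, T y := by
    have hxJ : x ∈ Set.Icc (0:ℝ) b := hJsub ⟨le_rfl, by linarith⟩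
    have hconst : ∫ _ in J, T x = T x * L := by
      rw [MeasureTheory.setIntegral_const, hJ_def, MeasureTheory.measureReal_def, Real.volume_Icc, smul_eq_mul]
      rw [show x + L - x = L by ring, ENNReal.toReal_ofReal hLpos.le, mul_comm]
    rw [← hconst]
    apply MeasureTheory.setIntegral_mono_on
    · exact MeasureTheory.integrableOn_const (by rw [hJ_def]; exact measure_Icc_lt_top.ne)
    · exact hTc_int
    · exact measurableSet_Icc
    · intro y hy
      exact hmonoT (hJsub ⟨le_rfl, by linarith⟩) (hJsub hy) hy.1
  -- bounding the integral of T over J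
  have hψk_int : IntegrableOn (fun z => hermiteFun k z ^ 2) J := (integrable_psi_sq k).integrableOn
  have hpq_cont : ContinuousOn (fun z : ℝ =>
      (Real.sqrt k * hermiteFun (k - 1) z - z / 2 * hermiteFun k z) ^ 2
        / ((k : ℝ) + 1/2 - z ^ 2 / 4)) J := by
    have hψc : ∀ j : ℕ, Continuous (hermiteFun j) := by
      intro j
      exact continuous_iff_continuousAt.2 fun y => (psi_hasDerivAt j y).continuousAt
    apply ContinuousOn.div
    · exact (((continuous_const.mul (hψc (k-1))).sub
        ((continuous_id.div_const 2).mul (hψc k))).pow 2).continuousOn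
    · exact (continuous_const.sub ((continuous_pow 2).div_const 4)).continuousOn
    · intro y hy
      exact (hqpos y (hsub (hJsub hy))).ne'
  have hpq_int : IntegrableOn (fun z : ℝ =>
      (Real.sqrt k * hermiteFun (k - 1) z - z / 2 * hermiteFun k z) ^ 2
        / ((k : ℝ) + 1/2 - z ^ 2 / 4)) J := hpq_cont.integrableOn_Icc
  have hsplit : ∫ y in J, T y = (∫ y in J, hermiteFun k y ^ 2)
      + ∫ y in J, (Real.sqrt k * hermiteFun (k - 1) y - y / 2 * hermiteFun k y) ^ 2
          / ((k : ℝ) + 1/2 - y ^ 2 / 4) := by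
    simp only [hT_def]
    rw [MeasureTheory.integral_add hψk_int hpq_int]
  have hpart1 : (∫ y in J, hermiteFun k y ^ 2) ≤ 1 := by
    rw [← integral_psi_sq' k]
    exact MeasureTheory.setIntegral_le_integral (integrable_psi_sq k)
      (Filter.Eventually.of_forall fun y => sq_nonneg _)
  have hαk : (0:ℝ) < α * k := mul_pos hα (by linarith)
  have hpart2 : (∫ y in J, (Real.sqrt k * hermiteFun (k - 1) y - y / 2 * hermiteFun k y) ^ 2
      / ((k : ℝ) + 1/2 - y ^ 2 / 4)) ≤ 3 / (2 * α) := by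
    have hstep : (∫ y in J, (Real.sqrt k * hermiteFun (k - 1) y - y / 2 * hermiteFun k y) ^ 2
        / ((k : ℝ) + 1/2 - y ^ 2 / 4))
        ≤ ∫ y in J, (Real.sqrt k * hermiteFun (k - 1) y - y / 2 * hermiteFun k y) ^ 2
          / (α * k) := by
      apply MeasureTheory.setIntegral_mono_on hpq_int
        (((integrable_p_sq k).div_const (α * k)).integrableOn) measurableSet_Icc
      intro y hy
      exact div_le_div_of_nonneg_left (sq_nonneg _) hαk (hq_lb y (hsub (hJsub hy)))
    have hnum : (∫ y in J, (Real.sqrt k * hermiteFun (k - 1) y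
        - y / 2 * hermiteFun k y) ^ 2) ≤ 3 / 2 * (k : ℝ) :=
      (MeasureTheory.setIntegral_le_integral (integrable_p_sq k)
        (Filter.Eventually.of_forall fun y => sq_nonneg _)).trans (integral_p_sq_le k hk)
    have hstep2 : (∫ y in J, (Real.sqrt k * hermiteFun (k - 1) y - y / 2 * hermiteFun k y) ^ 2
        / (α * k)) ≤ (3 / 2 * (k : ℝ)) / (α * k) := by
      rw [MeasureTheory.integral_div]
      gcongr
    have heq : (3 / 2 * (k : ℝ)) / (α * k) = 3 / (2 * α) := by
      have hk0 : (k : ℝ) ≠ 0 := by linarith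
      field_simp
    linarith [hstep, hstep2, heq.le, heq.ge]
  have hTle : T x ≤ (1 + 3 / (2 * α)) / L := by
    rw [le_div_iff₀ hLpos]
    calc T x * L ≤ ∫ y in J, T y := step1
      _ ≤ 1 + 3 / (2 * α) := by rw [hsplit]; linarith [hpart1, hpart2]
  have hxJ : x ∈ J := ⟨le_rfl, by linarith⟩
  have hqx : 0 < (k : ℝ) + 1/2 - x ^ 2 / 4 := hqpos x (hsub (hJsub hxJ))
  have hTx : T x = hermiteFun k x ^ 2
      + (Real.sqrt k * hermiteFun (k - 1) x - x / 2 * hermiteFun k x) ^ 2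
        / ((k : ℝ) + 1/2 - x ^ 2 / 4) := by rw [hT_def]

  constructor
  · calc hermiteFun k x ^ 2 ≤ T x := by
          rw [hTx]
          exact le_add_of_nonneg_right (div_nonneg (sq_nonneg _) hqx.le)
      _ ≤ (1 + 3 / (2 * α)) / L := hTle
      _ = (1 + 3 / (2 * α)) / (β * Real.sqrt k) := by rw [hL_def]
      _ ≤ 2 * (1 + 3 / (2 * α)) / (β * Real.sqrt k) := by
          gcongr
          linarith
      _ = C / Real.sqrt k := by rw [hC_def, div_div]
  · have h1 : (Real.sqrt k * hermiteFun (k - 1) x - x / 2 * hermiteFun k x) ^ 2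
        / ((k : ℝ) + 1/2 - x ^ 2 / 4) ≤ T x := by
      rw [hTx]
      exact le_add_of_nonneg_left (sq_nonneg _)
    have h2 : (Real.sqrt k * hermiteFun (k - 1) x - x / 2 * hermiteFun k x) ^ 2
        ≤ T x * ((k : ℝ) + 1/2 - x ^ 2 / 4) := (div_le_iff₀ hqx).1 h1
    have hTxnn : 0 ≤ T x := by
      rw [hTx]
      exact add_nonneg (sq_nonneg _) (div_nonneg (sq_nonneg _) hqx.le)
    have h3 : T x * ((k : ℝ) + 1/2 - x ^ 2 / 4) ≤ T x * (2 * k) := by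
      apply mul_le_mul_of_nonneg_left _ hTxnn
      nlinarith [sq_nonneg x, hk1]
    have h4 : T x * (2 * (k:ℝ)) ≤ (1 + 3 / (2 * α)) / L * (2 * k) := by
      apply mul_le_mul_of_nonneg_right hTle
      positivity
    have h5 : (1 + 3 / (2 * α)) / L * (2 * (k:ℝ))
        = 2 * (1 + 3 / (2 * α)) / β * ((k : ℝ) / Real.sqrt k) := by
      rw [hL_def]
      ring
    have h6 : ((k:ℝ)) / Real.sqrt k = Real.sqrt k := Real.div_sqrt
    calc (Real.sqrt k * hermiteFun (k - 1) x - x / 2 * hermiteFun k x) ^ 2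
        ≤ T x * ((k : ℝ) + 1/2 - x ^ 2 / 4) := h2
      _ ≤ T x * (2 * k) := h3
      _ ≤ (1 + 3 / (2 * α)) / L * (2 * k) := h4
      _ = 2 * (1 + 3 / (2 * α)) / β * ((k : ℝ) / Real.sqrt k) := h5
      _ = C * Real.sqrt k := by rw [h6, hC_def]

/-- Christoffel-Darboux -/
theorem cd_offdiag (n : ℕ) (x y : ℝ) :
    (x - y) * (∑ k ∈ Finset.range n, hermiteFun k x * hermiteFun k y)
      = Real.sqrt n * (hermiteFun n x * hermiteFun (n - 1) y
        - hermiteFun (n - 1) x * hermiteFun n y) := by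
  induction n with
  | zero => simp
  | succ n ih =>
    rw [Finset.sum_range_succ, mul_add, ih]
    have hx := psi_ladder n x
    have hy := psi_ladder n y
    simp only [Nat.add_sub_cancel]
    push_cast
    linear_combination (-(hermiteFun n y)) * hx + (hermiteFun n x) * hy

/-- confluent Christoffel-Darboux -/
theorem cd_diag (n : ℕ) (x : ℝ) :
    (∑ k ∈ Finset.range n, hermiteFun k x * hermiteFun k x)
      = Real.sqrt n * ((Real.sqrt n * hermiteFun (n - 1) x - x / 2 * hermiteFun n x)
          * hermiteFun (n - 1) x
        - (Real.sqrt (n - 1 : ℕ) * hermiteFun (n - 1 - 1) x - x / 2 * hermiteFun (n - 1) x)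
          * hermiteFun n x) := by
  induction n with
  | zero => simp
  | succ n ih =>
    rw [Finset.sum_range_succ, ih]
    simp only [Nat.add_sub_cancel]
    cases n with
    | zero =>
      norm_num
      ring
    | succ m =>
      simp only [Nat.add_sub_cancel]
      have hx1 := psi_ladder (m + 1) x
      have hx2 := psi_ladder m x
      have hS1 : Real.sqrt ((m : ℝ) + 1) * Real.sqrt ((m : ℝ) + 1) = (m : ℝ) + 1 :=
        Real.mul_self_sqrt (by positivity)
      have hS2 : Real.sqrt ((m : ℝ) + 1 + 1) * Real.sqrt ((m : ℝ) + 1 + 1) = (m : ℝ) + 1 + 1 :=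
        Real.mul_self_sqrt (by positivity)
      push_cast at hx1 hx2 ⊢
      linear_combination (Real.sqrt ((m : ℝ) + 1) * hermiteFun m x) * hx1
        - (Real.sqrt ((m : ℝ) + 1) * hermiteFun (m + 1) x) * hx2
        + (hermiteFun (m + 1) x) ^ 2 * hS1 - (hermiteFun (m + 1) x) ^ 2 * hS2

theorem psi_continuous (j : ℕ) : Continuous (hermiteFun j) :=
  continuous_iff_continuousAt.2 fun y => (psi_hasDerivAt j y).continuousAt

/-- bound for finitely many n by compactness -/
theorem small_bound (N : ℕ) (R : ℝ) :
    ∃ C : ℝ, 0 < C ∧ ∀ n ≤ N, ∀ x y : ℝ, |x| ≤ R → |y| ≤ R →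
      |∑ k ∈ Finset.range n, hermiteFun k x * hermiteFun k y| ≤ C ∧
      |(x - y) * ∑ k ∈ Finset.range n, hermiteFun k x * hermiteFun k y| ≤ C := by
  induction N with
  | zero =>
    refine ⟨1, one_pos, ?_⟩
    intro n hn x y _ _
    interval_cases n
    simp
  | succ N ihN =>
    obtain ⟨C0, hC0, hIH⟩ := ihN
    have hKcont : Continuous (fun p : ℝ × ℝ =>
        ∑ k ∈ Finset.range (N + 1), hermiteFun k p.1 * hermiteFun k p.2) := by
      apply continuous_finset_sum
      intro k _
      exact ((psi_continuous k).comp continuous_fst).mul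
        ((psi_continuous k).comp continuous_snd)
    have hcomp : IsCompact ((Set.Icc (-R) R) ×ˢ (Set.Icc (-R) R)) :=
      isCompact_Icc.prod isCompact_Icc
    obtain ⟨C1, hC1⟩ := hcomp.exists_bound_of_continuousOn hKcont.continuousOn
    obtain ⟨C2, hC2⟩ := hcomp.exists_bound_of_continuousOn
      (((continuous_fst.sub continuous_snd).mul hKcont).continuousOn)
    refine ⟨C0 + |C1| + |C2| + 1, by positivity, ?_⟩
    intro n hn x y hx hy
    rcases Nat.lt_succ_iff_lt_or_eq.1 (Nat.lt_succ_of_le hn) with h | rfl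
    · obtain ⟨b1, b2⟩ := hIH n (Nat.lt_succ_iff.1 h) x y hx hy
      constructor <;> [linarith [abs_nonneg C1, abs_nonneg C2]; linarith [abs_nonneg C1, abs_nonneg C2]]
    · have hmem : (x, y) ∈ (Set.Icc (-R) R) ×ˢ (Set.Icc (-R) R) := by
        constructor <;> [exact abs_le.1 hx; exact abs_le.1 hy]
      have b1 := hC1 (x, y) hmem
      have b2 := hC2 (x, y) hmem
      rw [Real.norm_eq_abs] at b1 b2
      constructor
      · calc |∑ k ∈ Finset.range (N + 1), hermiteFun k x * hermiteFun k y| ≤ C1 := b1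
          _ ≤ C0 + |C1| + |C2| + 1 := by
            linarith [le_abs_self C1, abs_nonneg C2, hC0]
      · calc |(x - y) * ∑ k ∈ Finset.range (N + 1), hermiteFun k x * hermiteFun k y|
            ≤ C2 := b2
          _ ≤ C0 + |C1| + |C2| + 1 := by
            linarith [le_abs_self C2, abs_nonneg C1, hC0]

theorem prod_abs_le (a b A B : ℝ) (hA : a ^ 2 ≤ A) (hB : b ^ 2 ≤ B) :
    |a * b| ≤ Real.sqrt (A * B) := by
  rw [← Real.sqrt_sq_eq_abs]
  apply Real.sqrt_le_sqrt
  rw [mul_pow]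
  exact mul_le_mul hA hB (sq_nonneg _) ((sq_nonneg a).trans hA)

theorem abs_le_of_sq_le (a b : ℝ) (h : a ^ 2 ≤ b ^ 2) (hb : 0 ≤ b) : |a| ≤ b := by
  rw [← Real.sqrt_sq_eq_abs]
  calc Real.sqrt (a ^ 2) ≤ Real.sqrt (b ^ 2) := Real.sqrt_le_sqrt h
    _ = b := Real.sqrt_sq hb

theorem sqrt_facts (n : ℕ) (hn2 : 2 ≤ n) :
    ((n - 1 : ℕ) : ℝ) = (n : ℝ) - 1 ∧ (1:ℝ) ≤ Real.sqrt ((n - 1 : ℕ) : ℝ) ∧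
      Real.sqrt n ≤ 2 * Real.sqrt ((n - 1 : ℕ) : ℝ) ∧
      Real.sqrt ((n - 1 : ℕ) : ℝ) ≤ Real.sqrt n ∧
      (n : ℝ) ≤ 2 * (Real.sqrt n * Real.sqrt ((n - 1 : ℕ) : ℝ)) ∧
      (1:ℝ) ≤ Real.sqrt n := by
  have h1 : (1:ℕ) ≤ n := by omega
  have hcast : ((n - 1 : ℕ) : ℝ) = (n : ℝ) - 1 := by
    rw [Nat.cast_sub h1, Nat.cast_one]
  have hn2' : (2:ℝ) ≤ (n:ℝ) := by exact_mod_cast hn2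
  have hf2 : (1:ℝ) ≤ Real.sqrt ((n - 1 : ℕ) : ℝ) := by
    rw [show (1:ℝ) = Real.sqrt 1 by simp]
    apply Real.sqrt_le_sqrt
    rw [hcast]; linarith
  have hf6 : (1:ℝ) ≤ Real.sqrt n := by
    rw [show (1:ℝ) = Real.sqrt 1 by simp]
    exact Real.sqrt_le_sqrt (by linarith)
  have hf3 : Real.sqrt n ≤ 2 * Real.sqrt ((n - 1 : ℕ) : ℝ) := by
    have : Real.sqrt n ≤ Real.sqrt (2 ^ 2 * (((n:ℝ)) - 1)) := by
      apply Real.sqrt_le_sqrt; nlinarith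
    rwa [Real.sqrt_mul (by norm_num), Real.sqrt_sq (by norm_num), ← hcast] at this
  have hf4 : Real.sqrt ((n - 1 : ℕ) : ℝ) ≤ Real.sqrt n := by
    apply Real.sqrt_le_sqrt; rw [hcast]; linarith
  have hf5 : (n : ℝ) ≤ 2 * (Real.sqrt n * Real.sqrt ((n - 1 : ℕ) : ℝ)) := by
    rw [← Real.sqrt_mul (by positivity)]
    have : (n:ℝ) / 2 ≤ Real.sqrt ((n:ℝ) * ((n - 1 : ℕ) : ℝ)) := by
      rw [show (n:ℝ)/2 = Real.sqrt (((n:ℝ)/2)^2) from (Real.sqrt_sq (by linarith)).symm]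
      apply Real.sqrt_le_sqrt
      rw [hcast]
      nlinarith
    linarith
  exact ⟨hcast, hf2, hf3, hf4, hf5, hf6⟩

theorem bulk_diag (C₁ : ℝ) (hC₁ : 0 < C₁) (n : ℕ) (hn2 : 2 ≤ n) (z : ℝ)
    (e1 : hermiteFun n z ^ 2 ≤ C₁ / Real.sqrt n)
    (e2 : (Real.sqrt n * hermiteFun (n - 1) z - z / 2 * hermiteFun n z) ^ 2
      ≤ C₁ * Real.sqrt n)
    (f1 : hermiteFun (n - 1) z ^ 2 ≤ C₁ / Real.sqrt ((n - 1 : ℕ) : ℝ))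
    (f2 : (Real.sqrt ((n-1 : ℕ) : ℝ) * hermiteFun (n - 1 - 1) z
        - z / 2 * hermiteFun (n - 1) z) ^ 2 ≤ C₁ * Real.sqrt ((n - 1 : ℕ) : ℝ)) :
    (∑ k ∈ Finset.range n, hermiteFun k z * hermiteFun k z) ≤ 4 * C₁ * Real.sqrt n := by
  obtain ⟨hcast, hu1, ht2u, hut, htu, ht1⟩ := sqrt_facts n hn2
  have hupos : (0:ℝ) < Real.sqrt ((n - 1 : ℕ) : ℝ) := lt_of_lt_of_le one_pos hu1
  have htpos : (0:ℝ) < Real.sqrt n := lt_of_lt_of_le one_pos ht1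
  have b1 : |(Real.sqrt n * hermiteFun (n - 1) z - z / 2 * hermiteFun n z)
      * hermiteFun (n - 1) z| ≤ 2 * C₁ := by
    refine (prod_abs_le _ _ _ _ e2 f1).trans ?_
    have harg : (C₁ * Real.sqrt n) * (C₁ / Real.sqrt ((n - 1 : ℕ) : ℝ)) ≤ (2 * C₁) ^ 2 := by
      have h1 : C₁ * Real.sqrt n ≤ C₁ * (2 * Real.sqrt ((n - 1 : ℕ) : ℝ)) :=
        mul_le_mul_of_nonneg_left ht2u hC₁.le
      calc (C₁ * Real.sqrt n) * (C₁ / Real.sqrt ((n - 1 : ℕ) : ℝ))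
          ≤ (C₁ * (2 * Real.sqrt ((n - 1 : ℕ) : ℝ))) * (C₁ / Real.sqrt ((n - 1 : ℕ) : ℝ)) :=
            mul_le_mul_of_nonneg_right h1 (by positivity)
        _ = 2 * C₁ ^ 2 * (Real.sqrt ((n - 1 : ℕ) : ℝ) / Real.sqrt ((n - 1 : ℕ) : ℝ)) := by ring
        _ = 2 * C₁ ^ 2 := by rw [div_self hupos.ne']; ring
        _ ≤ (2 * C₁) ^ 2 := by nlinarith
    calc Real.sqrt ((C₁ * Real.sqrt n) * (C₁ / Real.sqrt ((n - 1 : ℕ) : ℝ)))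
        ≤ Real.sqrt ((2 * C₁) ^ 2) := Real.sqrt_le_sqrt harg
      _ = 2 * C₁ := Real.sqrt_sq (by positivity)
  have b2 : |(Real.sqrt ((n-1 : ℕ) : ℝ) * hermiteFun (n - 1 - 1) z
      - z / 2 * hermiteFun (n - 1) z) * hermiteFun n z| ≤ 2 * C₁ := by
    refine (prod_abs_le _ _ _ _ f2 e1).trans ?_
    have harg : (C₁ * Real.sqrt ((n - 1 : ℕ) : ℝ)) * (C₁ / Real.sqrt n) ≤ (2 * C₁) ^ 2 := by
      have h1 : C₁ * Real.sqrt ((n - 1 : ℕ) : ℝ) ≤ C₁ * Real.sqrt n :=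
        mul_le_mul_of_nonneg_left hut hC₁.le
      calc (C₁ * Real.sqrt ((n - 1 : ℕ) : ℝ)) * (C₁ / Real.sqrt n)
          ≤ (C₁ * Real.sqrt n) * (C₁ / Real.sqrt n) :=
            mul_le_mul_of_nonneg_right h1 (by positivity)
        _ = C₁ ^ 2 * (Real.sqrt n / Real.sqrt n) := by ring
        _ = C₁ ^ 2 := by rw [div_self htpos.ne']; ring
        _ ≤ (2 * C₁) ^ 2 := by nlinarith
    calc Real.sqrt ((C₁ * Real.sqrt ((n - 1 : ℕ) : ℝ)) * (C₁ / Real.sqrt n))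
        ≤ Real.sqrt ((2 * C₁) ^ 2) := Real.sqrt_le_sqrt harg
      _ = 2 * C₁ := Real.sqrt_sq (by positivity)
  rw [cd_diag]
  set A := (Real.sqrt n * hermiteFun (n - 1) z - z / 2 * hermiteFun n z) * hermiteFun (n - 1) z
  set B := (Real.sqrt ((n-1 : ℕ) : ℝ) * hermiteFun (n - 1 - 1) z
      - z / 2 * hermiteFun (n - 1) z) * hermiteFun n z
  calc Real.sqrt n * (A - B) ≤ Real.sqrt n * (|A| + |B|) := by
        apply mul_le_mul_of_nonneg_left _ (Real.sqrt_nonneg _)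
        have := le_abs_self A
        have := neg_abs_le B
        linarith
    _ ≤ Real.sqrt n * (2 * C₁ + 2 * C₁) := by
        apply mul_le_mul_of_nonneg_left _ (Real.sqrt_nonneg _)
        linarith
    _ = 4 * C₁ * Real.sqrt n := by ring

theorem bulk_offdiag (C₁ : ℝ) (hC₁ : 0 < C₁) (n : ℕ) (hn2 : 2 ≤ n) (x y : ℝ)
    (e1x : hermiteFun n x ^ 2 ≤ C₁ / Real.sqrt n)
    (f1x : hermiteFun (n - 1) x ^ 2 ≤ C₁ / Real.sqrt ((n - 1 : ℕ) : ℝ))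
    (e1y : hermiteFun n y ^ 2 ≤ C₁ / Real.sqrt n)
    (f1y : hermiteFun (n - 1) y ^ 2 ≤ C₁ / Real.sqrt ((n - 1 : ℕ) : ℝ)) :
    |(x - y) * ∑ k ∈ Finset.range n, hermiteFun k x * hermiteFun k y| ≤ 4 * C₁ := by
  obtain ⟨hcast, hu1, ht2u, hut, htu, ht1⟩ := sqrt_facts n hn2
  have hupos : (0:ℝ) < Real.sqrt ((n - 1 : ℕ) : ℝ) := lt_of_lt_of_le one_pos hu1
  have htpos : (0:ℝ) < Real.sqrt n := lt_of_lt_of_le one_pos ht1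
  have hnpos : (0:ℝ) < (n:ℝ) := by positivity
  have key : ∀ a b : ℝ, a ^ 2 ≤ C₁ / Real.sqrt n →
      b ^ 2 ≤ C₁ / Real.sqrt ((n - 1 : ℕ) : ℝ) →
      |a * b| ≤ Real.sqrt (2 * C₁ ^ 2 / n) := by
    intro a b ha hb
    refine (prod_abs_le _ _ _ _ ha hb).trans ?_
    apply Real.sqrt_le_sqrt
    rw [div_mul_div_comm]
    rw [div_le_div_iff₀ (by positivity) hnpos]
    calc C₁ * C₁ * n ≤ C₁ * C₁ * (2 * (Real.sqrt n * Real.sqrt ((n - 1 : ℕ) : ℝ))) := by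
          apply mul_le_mul_of_nonneg_left htu (by positivity)
      _ = 2 * C₁ ^ 2 * (Real.sqrt n * Real.sqrt ((n - 1 : ℕ) : ℝ)) := by ring
  rw [cd_offdiag, abs_mul, abs_of_nonneg (Real.sqrt_nonneg (n:ℝ))]
  have h1 := key _ _ e1x f1y
  have htri : |hermiteFun n x * hermiteFun (n - 1) y - hermiteFun (n - 1) x * hermiteFun n y|
      ≤ |hermiteFun n x * hermiteFun (n - 1) y| + |hermiteFun (n - 1) x * hermiteFun n y| :=
    abs_sub _ _
  have h2' : |hermiteFun (n - 1) x * hermiteFun n y| ≤ Real.sqrt (2 * C₁ ^ 2 / n) := by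
    rw [abs_mul, mul_comm]
    rw [← abs_mul]
    exact key _ _ e1y f1x
  calc Real.sqrt n * |hermiteFun n x * hermiteFun (n - 1) y
        - hermiteFun (n - 1) x * hermiteFun n y|
      ≤ Real.sqrt n * (2 * Real.sqrt (2 * C₁ ^ 2 / n)) := by
        apply mul_le_mul_of_nonneg_left _ (Real.sqrt_nonneg _)
        linarith
    _ = 2 * (Real.sqrt n * Real.sqrt (2 * C₁ ^ 2 / n)) := by ring
    _ = 2 * Real.sqrt ((n : ℝ) * (2 * C₁ ^ 2 / n)) := by rw [← Real.sqrt_mul hnpos.le]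
    _ = 2 * Real.sqrt (2 * C₁ ^ 2) := by
        congr 2
        field_simp
    _ ≤ 2 * (2 * C₁) := by
        have : Real.sqrt (2 * C₁ ^ 2) ≤ Real.sqrt ((2 * C₁) ^ 2) :=
          Real.sqrt_le_sqrt (by nlinarith)
        rw [Real.sqrt_sq (by positivity)] at this
        linarith
    _ = 4 * C₁ := by ring

end HermAux

end HermAuxSection

/-- The `n`-th GUE correlation kernel `K_n(x,y) = ∑_{k=0}^{n−1} ψ_k(x)·ψ_k(y)`. -/
noncomputable def gueKernel (n : ℕ) (x y : ℝ) : ℝ :=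
  ∑ k ∈ Finset.range n, hermiteFun k x * hermiteFun k y

open HermAux in
set_option maxHeartbeats 1600000 in
/-- **Bulk bound on the GUE kernel.** Fix `E ∈ (−2,2)` and `δ > 0` with
`[E−δ, E+δ] ⊂ (−2,2)`. Then there is `C > 0` (depending only on `E`, `δ`) such that for
all `n ≥ 1` and all `x, y ∈ [(E−δ)√n, (E+δ)√n]`: `|K_n(x,y)| ≤ C√n`, and if moreover
`x ≠ y` then `|K_n(x,y)| ≤ C/|x−y|`. -/
theorem gueKernel_bulk_bound (E : ℝ) (hE : E ∈ Set.Ioo (-2 : ℝ) 2) (δ : ℝ) (hδ : 0 < δ)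
    (hδE : Set.Icc (E - δ) (E + δ) ⊆ Set.Ioo (-2 : ℝ) 2) :
    ∃ C : ℝ, 0 < C ∧ ∀ (n : ℕ), 1 ≤ n → ∀ x y : ℝ,
      x ∈ Set.Icc ((E - δ) * Real.sqrt n) ((E + δ) * Real.sqrt n) →
      y ∈ Set.Icc ((E - δ) * Real.sqrt n) ((E + δ) * Real.sqrt n) →
      |gueKernel n x y| ≤ C * Real.sqrt n ∧
        (x ≠ y → |gueKernel n x y| ≤ C / |x - y|) := by
  obtain ⟨m, hm_def⟩ : ∃ a : ℝ, a = max (|E - δ|) (|E + δ|) := ⟨_, rfl⟩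
  have hlo := hδE ⟨le_rfl, by linarith⟩
  have hhi := hδE ⟨by linarith, le_rfl⟩
  have hm0 : 0 ≤ m := by rw [hm_def]; exact le_trans (abs_nonneg _) (le_max_left _ _)
  have hmlt : m < 2 := by
    rw [hm_def]
    exact max_lt (abs_lt.2 ⟨hlo.1, hlo.2⟩) (abs_lt.2 ⟨hhi.1, hhi.2⟩)
  obtain ⟨r, hr_def⟩ : ∃ a : ℝ, a = (m + 2) / 2 := ⟨_, rfl⟩
  obtain ⟨r', hr'_def⟩ : ∃ a : ℝ, a = (3 * m + 2) / 4 := ⟨_, rfl⟩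
  have hmr' : m < r' := by rw [hr'_def]; linarith
  have hr'r : r' < r := by rw [hr'_def, hr_def]; linarith
  have hr2 : r < 2 := by rw [hr_def]; linarith
  have hr'0 : 0 ≤ r' := by rw [hr'_def]; linarith
  obtain ⟨C₁, hC₁, hEn⟩ := energy_bound r' r hr'0 hr'r hr2
  have hd : 0 < r' ^ 2 - m ^ 2 := by nlinarith
  obtain ⟨n₀, hn₀⟩ : ∃ N : ℕ, N = Nat.ceil (r' ^ 2 / (r' ^ 2 - m ^ 2)) + 2 := ⟨_, rfl⟩
  obtain ⟨Cs, hCs, hSmall⟩ := small_bound n₀ (2 * Real.sqrt n₀)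
  refine ⟨Cs + 7 * C₁ + 1, by positivity, ?_⟩
  intro n hn x y hx hy
  have hsn0 : (0:ℝ) ≤ Real.sqrt n := Real.sqrt_nonneg _
  have hsn1 : (1:ℝ) ≤ Real.sqrt n := by
    rw [show (1:ℝ) = Real.sqrt 1 by simp]
    exact Real.sqrt_le_sqrt (by exact_mod_cast hn)
  -- membership in the symmetric interval
  have habs : ∀ z : ℝ, z ∈ Set.Icc ((E - δ) * Real.sqrt n) ((E + δ) * Real.sqrt n) →
      |z| ≤ m * Real.sqrt n := by
    intro z hz
    rw [abs_le]
    constructor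
    · have h1 : -(m * Real.sqrt n) ≤ (E - δ) * Real.sqrt n := by
        have : -m ≤ E - δ := by
          rw [hm_def]
          have := neg_abs_le (E - δ)
          have := le_max_left (|E - δ|) (|E + δ|)
          linarith
        nlinarith [hsn0]
      linarith [hz.1]
    · have h2 : (E + δ) * Real.sqrt n ≤ m * Real.sqrt n := by
        have : E + δ ≤ m := by
          rw [hm_def]
          have := le_abs_self (E + δ)
          have := le_max_right (|E - δ|) (|E + δ|)
          linarith
        nlinarith [hsn0]
      linarith [hz.2]
  have hxm := habs x hx
  have hym := habs y hy
  by_cases hcase : n < n₀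
  · -- small n case
    have hsn₀ : Real.sqrt n ≤ Real.sqrt n₀ := Real.sqrt_le_sqrt (by exact_mod_cast hcase.le)
    have hzR : ∀ z : ℝ, |z| ≤ m * Real.sqrt n → |z| ≤ 2 * Real.sqrt n₀ := by
      intro z hz
      calc |z| ≤ m * Real.sqrt n := hz
        _ ≤ 2 * Real.sqrt n₀ := by nlinarith [hsn0, Real.sqrt_nonneg (n₀:ℝ)]
    obtain ⟨b1, b2⟩ := hSmall n hcase.le x y (hzR x hxm) (hzR y hym)
    constructor
    · show |gueKernel n x y| ≤ _
      calc |gueKernel n x y| ≤ Cs := b1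
        _ ≤ (Cs + 7 * C₁ + 1) * 1 := by nlinarith
        _ ≤ (Cs + 7 * C₁ + 1) * Real.sqrt n := by nlinarith
    · intro hxy
      rw [le_div_iff₀ (abs_pos.2 (sub_ne_zero.2 hxy))]
      calc |gueKernel n x y| * |x - y| = |(x - y) * gueKernel n x y| := by
            rw [abs_mul]; ring
        _ ≤ Cs := b2
        _ ≤ Cs + 7 * C₁ + 1 := by linarith
  · -- large n case
    have hnn₀ : n₀ ≤ n := le_of_not_gt hcase
    have hn2 : 2 ≤ n := le_trans (by omega) hnn₀
    have h1n : (1:ℕ) ≤ n - 1 := by omega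
    obtain ⟨hcast, hu1, ht2u, hut, htu, ht1⟩ := sqrt_facts n hn2
    -- m √n ≤ r' √(n-1)
    have hceil : r' ^ 2 / (r' ^ 2 - m ^ 2) ≤ (n : ℝ) := by
      calc r' ^ 2 / (r' ^ 2 - m ^ 2) ≤ (Nat.ceil (r' ^ 2 / (r' ^ 2 - m ^ 2)) : ℝ) :=
            Nat.le_ceil _
        _ ≤ (n₀ : ℝ) := by rw [hn₀]; push_cast; linarith
        _ ≤ (n : ℝ) := by exact_mod_cast hnn₀
    have hm2n : m ^ 2 * n ≤ r' ^ 2 * ((n:ℝ) - 1) := by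
      rw [div_le_iff₀ hd] at hceil
      nlinarith
    have hsqle : m * Real.sqrt n ≤ r' * Real.sqrt ((n - 1 : ℕ) : ℝ) := by
      have e1 : m * Real.sqrt n = Real.sqrt (m ^ 2 * n) := by
        rw [Real.sqrt_mul (sq_nonneg m), Real.sqrt_sq hm0]
      have e2 : r' * Real.sqrt ((n - 1 : ℕ) : ℝ) = Real.sqrt (r' ^ 2 * ((n:ℝ) - 1)) := by
        rw [Real.sqrt_mul (sq_nonneg r'), Real.sqrt_sq hr'0, hcast]
      rw [e1, e2]
      exact Real.sqrt_le_sqrt hm2n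
    have hr'sn : m * Real.sqrt n ≤ r' * Real.sqrt n :=
      mul_le_mul_of_nonneg_right hmr'.le hsn0
    -- energy bounds
    obtain ⟨ex1, ex2⟩ := hEn n hn x (hxm.trans hr'sn)
    obtain ⟨fx1, fx2⟩ := hEn (n - 1) h1n x (hxm.trans hsqle)
    obtain ⟨ey1, ey2⟩ := hEn n hn y (hym.trans hr'sn)
    obtain ⟨fy1, fy2⟩ := hEn (n - 1) h1n y (hym.trans hsqle)
    have hDx := bulk_diag C₁ hC₁ n hn2 x ex1 ex2 fx1 fx2
    have hDy := bulk_diag C₁ hC₁ n hn2 y ey1 ey2 fy1 fy2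
    have hOff := bulk_offdiag C₁ hC₁ n hn2 x y ex1 fx1 ey1 fy1
    constructor
    · -- Cauchy-Schwarz
      have hCS := Finset.sum_mul_sq_le_sq_mul_sq (Finset.range n)
        (fun k => hermiteFun k x) (fun k => hermiteFun k y)
      have hsq_eq : ∀ z : ℝ, (∑ k ∈ Finset.range n, hermiteFun k z ^ 2)
          = ∑ k ∈ Finset.range n, hermiteFun k z * hermiteFun k z := by
        intro z
        apply Finset.sum_congr rfl
        intro k _
        ring
      have hDy0 : (0:ℝ) ≤ ∑ k ∈ Finset.range n, hermiteFun k y ^ 2 :=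
        Finset.sum_nonneg fun k _ => sq_nonneg _
      have hDx0 : (0:ℝ) ≤ ∑ k ∈ Finset.range n, hermiteFun k x ^ 2 :=
        Finset.sum_nonneg fun k _ => sq_nonneg _
      have hM : (0:ℝ) ≤ 4 * C₁ * Real.sqrt n := by positivity
      have hKsq : (gueKernel n x y) ^ 2 ≤ (4 * C₁ * Real.sqrt n) ^ 2 := by
        calc (gueKernel n x y) ^ 2
            ≤ (∑ k ∈ Finset.range n, hermiteFun k x ^ 2)
              * ∑ k ∈ Finset.range n, hermiteFun k y ^ 2 := hCS
          _ ≤ (4 * C₁ * Real.sqrt n) * (4 * C₁ * Real.sqrt n) := by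
              apply mul_le_mul _ _ hDy0 hM
              · rw [hsq_eq x]; exact hDx
              · rw [hsq_eq y]; exact hDy
          _ = (4 * C₁ * Real.sqrt n) ^ 2 := by ring
      have := abs_le_of_sq_le _ _ hKsq hM
      calc |gueKernel n x y| ≤ 4 * C₁ * Real.sqrt n := this
        _ ≤ (Cs + 7 * C₁ + 1) * Real.sqrt n := by nlinarith
    · intro hxy
      rw [le_div_iff₀ (abs_pos.2 (sub_ne_zero.2 hxy))]
      calc |gueKernel n x y| * |x - y| = |(x - y) * gueKernel n x y| := by
            rw [abs_mul]; ring
        _ ≤ 4 * C₁ := hOff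
        _ ≤ Cs + 7 * C₁ + 1 := by linarith
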